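/- For the rank-one dressing factor D_j(ζ) = I + B_j/(ζ−ζ_j) − σ₃B_jσ₃/(ζ+ζ_j) constructed from B_j = |z_j⟩⟨y_j| as in the dressing method, the identity σ₂ B_j^T σ₂ = ((ζ_j² − ζ̄_j²)/(2ζ_j)) D_j⁻¹(ζ_j) holds, where σ₂ = [[0,−i],[i,0]] and D_j⁻¹(ζ) = I + B_j†/(ζ−ζ̄_j) − σ₃B_j†σ₃/(ζ+ζ̄_j). -/

import Mathlib

open Matrix Filter Topology ComplexConjugate

noncomputable section

attribute [local instance] Matrix.normedAddCommGroup Matrix.normedSpace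

abbrev M2 := Matrix (Fin 2) (Fin 2) ℂ

def σ3 : M2 := !![1, 0; 0, -1]

def σ2 : M2 := !![0, -Complex.I; Complex.I, 0]

/-- A 2×2 matrix is diagonal if its off-diagonal entries vanish. -/
def IsDiag2 (A : M2) : Prop := A 0 1 = 0 ∧ A 1 0 = 0

/-- A 2×2 matrix is off-diagonal if its diagonal entries vanish. -/
def IsOffDiag2 (A : M2) : Prop := A 0 0 = 0 ∧ A 1 1 = 0

set_option maxHeartbeats 2000000 in
/-- `σ₂ Bⱼᵀ σ₂ = ((ζⱼ² − ζ̄ⱼ²)/(2ζⱼ)) Dⱼ⁻¹(ζⱼ)`. -/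
theorem stmt8
    (zj : ℂ) (hzj : zj ^ 2 ≠ (conj zj) ^ 2)
    (y : Fin 2 → ℂ) (hy : y ≠ 0)
    (α : ℂ) (hα : α * (zj * y 0 * conj (y 0) + conj zj * y 1 * conj (y 1)) = 1)
    (z : Fin 2 → ℂ)
    (hz0 : z 0 = (zj ^ 2 - (conj zj) ^ 2) / 2 * α * conj (y 0))
    (hz1 : z 1 = (zj ^ 2 - (conj zj) ^ 2) / 2 * conj α * conj (y 1))
    (B : M2) (hB : B = Matrix.vecMulVec z y)
    (E : ℂ → M2)
    (hE : ∀ w : ℂ, E w = 1 + (w - conj zj)⁻¹ • Bᴴ - (w + conj zj)⁻¹ • (σ3 * Bᴴ * σ3))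
    : σ2 * Bᵀ * σ2 = ((zj ^ 2 - (conj zj) ^ 2) / (2 * zj)) • E zj := by
  have hzne : zj ≠ 0 := by rintro rfl; simp at hzj
  have hm : zj - conj zj ≠ 0 := by
    intro h
    exact hzj (by rw [sub_eq_zero] at h; rw [← h])
  have hp : zj + conj zj ≠ 0 := by
    intro h
    exact hzj (by linear_combination (zj - conj zj) * h)
  have hα' : conj α * (conj zj * conj (y 0) * y 0 + zj * conj (y 1) * y 1) = 1 := by
    have := congrArg conj hα
    simp only [_root_.map_mul, map_add, Complex.conj_conj, _root_.map_one] at this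
    linear_combination this
  subst hB
  rw [hE zj]
  ext i j
  fin_cases i <;> fin_cases j <;>
    simp [σ2, σ3, Matrix.mul_apply, Matrix.vecMulVec_apply, Fin.sum_univ_two,
      Matrix.one_apply, hz0, hz1, Complex.star_def, map_div₀, map_ofNat,
      Matrix.vecMul, dotProduct, Complex.I_sq] <;>
    field_simp
  · linear_combination (-2 * zj * conj α * conj (y 1) * y 1 * (zj - conj zj) * (zj + conj zj))
        * Complex.I_sq + (2 * (zj - conj zj) * (zj + conj zj)) * hα'
  · linear_combination (2 * zj * α * conj (y 0) * y 1 * (zj - conj zj) * (zj + conj zj))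
        * Complex.I_sq
  · linear_combination (2 * zj * conj α * conj (y 1) * y 0 * (zj - conj zj) * (zj + conj zj))
        * Complex.I_sq
  · linear_combination (-2 * zj * α * y 0 * conj (y 0) * (zj - conj zj) * (zj + conj zj))
        * Complex.I_sq + (2 * (zj - conj zj) * (zj + conj zj)) * hα
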